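/- Let $\{\xi(z):z\in\mathbb{Z}^d\}$ be i.i.d. with distribution function $F(x)=1-e^{-x^\gamma}$, $x\ge0$, for some $0<\gamma\le1$, and $M_r=\max_{|z|\le r}\xi(z)$. Then for every $\delta\in(0,1)$, almost surely, $M_r\le (d\log r)^{1/\gamma}+\gamma^{-1}(d\log r)^{1/\gamma-1}\log\log r+(\log r)^{1/\gamma-1}(\log\log r)^{\delta}$ eventually for all $r$. -/

import Mathlib

open MeasureTheory ProbabilityTheory Filter

/-- ℓ¹-norm of a lattice point, as a real number. -/
noncomputable def latticeNorm {d : ℕ} (z : Fin d → ℤ) : ℝ := ∑ j, |(z j : ℝ)|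

section AuxWeibull
open Real
open scoped ENNReal

lemma convex_rpow_taylor {a x p : ℝ} (ha : 0 < a) (hx : 0 ≤ x) (hp : 1 ≤ p) :
    (a + x) ^ p ≤ a ^ p + p * (a + x) ^ (p - 1) * x := by
  have hs : 0 < a + x := by linarith
  have hu : (-1:ℝ) ≤ a / (a + x) - 1 := by
    have : 0 ≤ a / (a+x) := by positivity
    linarith
  have hber := one_add_mul_self_le_rpow_one_add hu hp
  rw [add_sub_cancel] at hber
  have hmul := mul_le_mul_of_nonneg_right hber (Real.rpow_pos_of_pos hs p).le
  rw [← Real.mul_rpow (by positivity) hs.le, div_mul_cancel₀ _ hs.ne'] at hmul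
  have hsp : (a+x)^p = (a+x)^(p-1) * (a+x) := by
    rw [← Real.rpow_add_one hs.ne' (p-1)]; ring_nf
  have key : (1 + p * (a / (a + x) - 1)) * (a+x)^p
      = (a+x)^p - p * (a+x)^(p-1) * x := by
    rw [hsp]; field_simp; ring
  rw [key] at hmul
  linarith

lemma exp_le_one_add_two_mul {η : ℝ} (h0 : 0 ≤ η) (h1 : η ≤ 1/2) : Real.exp η ≤ 1 + 2*η := by
  have h := Real.add_one_le_exp (-η)
  have hpos : (0:ℝ) < 1 - η := by linarith
  have hprod : Real.exp η * Real.exp (-η) = 1 := by rw [← Real.exp_add]; simp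
  have hA : Real.exp η * (1 - η) ≤ 1 := by
    calc Real.exp η * (1 - η) ≤ Real.exp η * Real.exp (-η) := by
          apply mul_le_mul_of_nonneg_left (by linarith) (Real.exp_pos η).le
      _ = 1 := hprod
  nlinarith [Real.exp_pos η]

noncomputable def bk (d : ℕ) (γ δ : ℝ) (k : ℕ) : ℝ :=
  ((d:ℝ)*k)^(1/γ) + γ⁻¹*((d:ℝ)*k)^(1/γ-1)*Real.log k + (k:ℝ)^(1/γ-1)*Real.log k ^ δ

noncomputable def κc (d : ℕ) (γ : ℝ) : ℝ := (d:ℝ)^(1-1/γ) * γ / 2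

set_option maxHeartbeats 1000000 in
lemma coreIneq {d p κ t L Λ : ℝ} (hd1 : 1 ≤ d) (hp : 1 ≤ p) (hκ0 : 0 < κ)
    (hκhalf : κ ≤ 1/2) (ht3 : 3 ≤ t) (hL1 : 1 ≤ L) (hLd : d ≤ L) (hΛ1 : 1 ≤ Λ)
    (hκΛ : 8*d ≤ κ*Λ) (hΛL : Λ ≤ L) (key3 : 72*p*(L*L) ≤ κ/2*t)
    (h2pκ : 2*p*κ = d^(1-p)) :
    (d*t + (L + κ*Λ + 4*d)) ^ p ≤ (d*t)^p + p*(d*t)^(p-1)*L + t^(p-1)*Λ := by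
  have hd0 : (0:ℝ) < d := by linarith
  have ht0 : (0:ℝ) < t := by linarith
  have hp0 : (0:ℝ) < p := by linarith
  have hΛ0 : (0:ℝ) ≤ Λ := by linarith
  have hκΛ0 : (0:ℝ) ≤ κ*Λ := mul_nonneg hκ0.le hΛ0
  have hκΛL : κ*Λ ≤ L := by
    have h := mul_le_mul hκhalf hΛL hΛ0 (by norm_num : (0:ℝ) ≤ 1/2)
    linarith
  set X := L + κ*Λ + 4*d with hXdef
  have hX0 : 0 < X := by rw [hXdef]; linarith
  have hX6L : X ≤ 6*L := by rw [hXdef]; linarith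
  set a := d*t with hadef
  have ha : 0 < a := by rw [hadef]; positivity
  have hta : t ≤ a := by rw [hadef]; exact le_mul_of_one_le_left ht0.le hd1
  clear_value X a
  set e := X/a with hedef
  have he0 : 0 ≤ e := by rw [hedef]; positivity
  set η := (p-1)*e with hηdef
  have hη0 : 0 ≤ η := by
    rw [hηdef]; exact mul_nonneg (by linarith) he0
  have hηa : η * a = (p-1)*X := by
    rw [hηdef, hedef]; field_simp
  clear_value e η
  have hXX : X*X ≤ 36*(L*L) := by
    have h := mul_le_mul hX6L hX6L hX0.le (by linarith : (0:ℝ) ≤ 6*L)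
    linarith
  have hη12 : η ≤ 1/2 := by
    have h6 : (p-1)*X ≤ (p-1)*(6*L) := mul_le_mul_of_nonneg_left hX6L (by linarith)
    have h7 : (p-1)*(6*L) ≤ p*(6*L) := mul_le_mul_of_nonneg_right (by linarith) (by linarith)
    have h8a := mul_le_mul_of_nonneg_left hL1 (by positivity : (0:ℝ) ≤ 6*p*L)
    have h8b : (0:ℝ) ≤ p*(L*L) := by positivity
    have h9 := mul_le_mul_of_nonneg_right (by linarith : κ/2 ≤ 1/2) ht0.le
    have hbound : η * a ≤ (1/2) * a := by
      rw [hηa]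
      linarith [h6, h7, h8a, h8b, key3, h9, hta]
    exact le_of_mul_le_mul_right hbound ha
  have h2ηX : 2*η*X ≤ κ/2 * Λ := by
    have hbound : (2*η*X) * a ≤ (κ/2 * Λ) * a := by
      have heq : (2*η*X)*a = 2*(η*a*X) := by ring
      rw [heq, hηa]
      have m1 := mul_le_mul_of_nonneg_right
        (mul_le_mul_of_nonneg_right (by linarith : p-1 ≤ p) hX0.le) hX0.le
      have m2 := mul_le_mul_of_nonneg_left hXX hp0.le
      have m3 := mul_le_mul_of_nonneg_left hta (by positivity : (0:ℝ) ≤ κ/2)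
      have m4 := mul_le_mul_of_nonneg_left hΛ1 (by positivity : (0:ℝ) ≤ κ/2*a)
      linarith [m1, m2, m3, m4, key3]
    exact le_of_mul_le_mul_right hbound ha
  have h1e0 : (0:ℝ) < 1 + e := by linarith
  have h1e : (1+e)^(p-1) ≤ 1 + 2*η := by
    rw [Real.rpow_def_of_pos h1e0]
    have hlog : Real.log (1+e) ≤ e := by
      have := Real.log_le_sub_one_of_pos h1e0; linarith
    calc Real.exp (Real.log (1+e) * (p-1)) ≤ Real.exp η := by
          apply Real.exp_le_exp.mpr
          rw [hηdef]
          have := mul_le_mul_of_nonneg_left hlog (by linarith : (0:ℝ) ≤ p-1)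
          linarith
      _ ≤ 1 + 2*η := exp_le_one_add_two_mul hη0 hη12
  have hse : a + X = a*(1+e) := by
    rw [hedef]; field_simp
  have hsp1 : (a+X)^(p-1) ≤ a^(p-1) * (1+2*η) := by
    rw [hse, Real.mul_rpow ha.le h1e0.le]
    exact mul_le_mul_of_nonneg_left h1e (Real.rpow_nonneg ha.le _)
  have hKI : (1+2*η)*X ≤ L + 2*(κ*Λ) := by
    have hXeq : X = L + κ*Λ + 4*d := hXdef
    linarith [h2ηX, hκΛ]
  have haexp : a^(p-1) = d^(p-1) * t^(p-1) := by
    rw [hadef]; exact Real.mul_rpow hd0.le ht0.le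
  have hdd : d^(1-p) * d^(p-1) = 1 := by
    rw [← Real.rpow_add hd0]; ring_nf; exact Real.rpow_zero _
  have htp : 2*p*κ * a^(p-1) = t^(p-1) := by
    rw [h2pκ, haexp, ← mul_assoc, hdd, one_mul]
  have hstep : p*(a+X)^(p-1)*X ≤ p*a^(p-1)*L + t^(p-1)*Λ := by
    have hh1 : p*(a+X)^(p-1)*X ≤ p*(a^(p-1)*(1+2*η))*X := by
      apply mul_le_mul_of_nonneg_right _ hX0.le
      exact mul_le_mul_of_nonneg_left hsp1 hp0.le
    have hh2 : p*(a^(p-1)*(1+2*η))*X = p*a^(p-1)*((1+2*η)*X) := by ring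
    have hh3 : p*a^(p-1)*((1+2*η)*X) ≤ p*a^(p-1)*(L + 2*(κ*Λ)) := by
      apply mul_le_mul_of_nonneg_left hKI
      positivity
    have hh4 : p*a^(p-1)*(L + 2*(κ*Λ)) = p*a^(p-1)*L + (2*p*κ*a^(p-1))*Λ := by ring
    rw [htp] at hh4
    linarith
  have hconv := convex_rpow_taylor ha hX0.le hp
  linarith [hconv, hstep]

set_option maxHeartbeats 1000000 in
lemma claimC {d : ℕ} (hd : 1 ≤ d) {γ δ : ℝ} (hγ0 : 0 < γ) (hγ1 : γ ≤ 1)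
    (hδ0 : 0 < δ) (hδ1 : δ < 1) :
    ∀ᶠ k : ℕ in atTop,
      Real.exp (((k:ℝ)+4)*d) * Real.exp (-(bk d γ δ k ^ γ)) ≤
        Real.exp (-(κc d γ * Real.log k ^ δ)) / k := by
  have hd0 : (0:ℝ) < d := by exact_mod_cast hd
  have hd1 : (1:ℝ) ≤ d := by exact_mod_cast hd
  have hp : 1 ≤ 1/γ := by rw [le_div_iff₀ hγ0]; linarith
  have hp0 : (0:ℝ) < 1/γ := by positivity
  have hκ0 : 0 < κc d γ := by unfold κc; positivity
  have hκhalf : κc d γ ≤ 1/2 := by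
    have h1 : (d:ℝ)^(1-1/γ) ≤ 1 :=
      Real.rpow_le_one_of_one_le_of_nonpos hd1 (by linarith)
    have h2 : (0:ℝ) ≤ (d:ℝ)^(1-1/γ) := Real.rpow_nonneg hd0.le _
    unfold κc; nlinarith
  have h2pκ : 2*(1/γ)*κc d γ = (d:ℝ)^(1-1/γ) := by
    unfold κc; field_simp
  -- eventual facts
  have ev1 : ∀ᶠ k : ℕ in atTop, max 1 (d:ℝ) ≤ Real.log k :=
    (Real.tendsto_log_atTop.comp tendsto_natCast_atTop_atTop).eventually_ge_atTop _
  have ev2 : ∀ᶠ k : ℕ in atTop, max 1 (8*d/κc d γ) ≤ Real.log k ^ δ :=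
    ((tendsto_rpow_atTop hδ0).comp
      (Real.tendsto_log_atTop.comp tendsto_natCast_atTop_atTop)).eventually_ge_atTop _
  have ev3 : ∀ᶠ k : ℕ in atTop,
      72*(1/γ)*(Real.log k * Real.log k) ≤ κc d γ/2 * k := by
    have hc : (0:ℝ) < (κc d γ/2)/(72*(1/γ)) := by positivity
    have hev := (Asymptotics.isLittleO_iff.mp
      (isLittleO_log_rpow_rpow_atTop (2:ℝ) one_pos)) hc
    have hev2 := tendsto_natCast_atTop_atTop.eventually hev
    filter_upwards [hev2, eventually_ge_atTop 1] with k hk hk1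
    have hk0 : (0:ℝ) < k := by exact_mod_cast hk1
    have hk1' : (1:ℝ) ≤ k := by exact_mod_cast hk1
    rw [Real.norm_eq_abs, Real.norm_eq_abs, Real.rpow_one,
      abs_of_nonneg (Real.rpow_nonneg (Real.log_nonneg hk1') 2),
      abs_of_nonneg hk0.le] at hk
    rw [Real.rpow_two] at hk
    have h72 : (0:ℝ) ≤ 72*(1/γ) := by positivity
    have h5 := mul_le_mul_of_nonneg_left hk h72
    have heq : 72*(1/γ)*((κc d γ/2)/(72*(1/γ))*(k:ℝ)) = κc d γ/2*k := by
      field_simp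
    linarith [h5]
  filter_upwards [ev1, ev2, ev3, eventually_ge_atTop 3] with k h1 h2 h3 hk3
  have ht3 : (3:ℝ) ≤ (k:ℝ) := by exact_mod_cast hk3
  have ht0 : (0:ℝ) < (k:ℝ) := by linarith
  have hL1 : (1:ℝ) ≤ Real.log k := le_trans (le_max_left _ _) h1
  have hLd : (d:ℝ) ≤ Real.log k := le_trans (le_max_right _ _) h1
  have hΛ1 : (1:ℝ) ≤ Real.log k ^ δ := le_trans (le_max_left _ _) h2
  have hΛ8d : 8*(d:ℝ)/κc d γ ≤ Real.log k ^ δ := le_trans (le_max_right _ _) h2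
  have hκΛ : 8*(d:ℝ) ≤ κc d γ * Real.log k ^ δ := by
    rw [div_le_iff₀ hκ0] at hΛ8d; nlinarith
  have hΛL : Real.log k ^ δ ≤ Real.log k := by
    have := Real.rpow_le_rpow_of_exponent_le hL1 hδ1.le
    rwa [Real.rpow_one] at this
  have hcore := coreIneq hd1 hp hκ0 hκhalf ht3 hL1 hLd hΛ1 hκΛ hΛL h3 h2pκ
  -- bk ≥ s^p where s = d k + X
  have hbk : bk d γ δ k = ((d:ℝ)*k)^(1/γ) + (1/γ)*((d:ℝ)*k)^(1/γ-1)*Real.log k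
      + (k:ℝ)^(1/γ-1)*Real.log k ^ δ := by
    unfold bk; rw [one_div]
  have hsb : ((d:ℝ)*k + (Real.log k + κc d γ * Real.log k ^ δ + 4*d)) ^ (1/γ)
      ≤ bk d γ δ k := by
    rw [hbk]; exact hcore
  have hs0 : (0:ℝ) ≤ (d:ℝ)*k + (Real.log k + κc d γ * Real.log k ^ δ + 4*d) := by
    have : (0:ℝ) ≤ κc d γ * Real.log k ^ δ := by positivity
    nlinarith
  have hbγ : (d:ℝ)*k + (Real.log k + κc d γ * Real.log k ^ δ + 4*d)
      ≤ bk d γ δ k ^ γ := by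
    have hmono := Real.rpow_le_rpow (Real.rpow_nonneg hs0 _) hsb hγ0.le
    rwa [← Real.rpow_mul hs0, one_div, inv_mul_cancel₀ hγ0.ne', Real.rpow_one] at hmono
  have hfix : ((k:ℝ)+4)*(d:ℝ) = (k:ℝ)*d + 4*d := by ring
  rw [hfix]
  calc Real.exp (((k:ℝ))*d + 4*d) * Real.exp (-(bk d γ δ k ^ γ))
      ≤ Real.exp (((k:ℝ))*d + 4*d)
          * Real.exp (-((d:ℝ)*k + (Real.log k + κc d γ * Real.log k ^ δ + 4*d))) := by
        apply mul_le_mul_of_nonneg_left _ (Real.exp_pos _).le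
        exact Real.exp_le_exp.mpr (by linarith)
    _ = Real.exp (-(κc d γ * Real.log k ^ δ)) * Real.exp (-Real.log k) := by
        rw [← Real.exp_add, ← Real.exp_add]
        congr 1
        ring
    _ = Real.exp (-(κc d γ * Real.log k ^ δ)) / k := by
        rw [Real.exp_neg (Real.log (k:ℝ)), Real.exp_log ht0]
        ring

lemma bk_nonneg (d : ℕ) {γ : ℝ} (hγ0 : 0 < γ) (δ : ℝ) (k : ℕ) : 0 ≤ bk d γ δ k := by
  unfold bk
  have h1 : (0:ℝ) ≤ Real.log k := by
    rcases Nat.eq_zero_or_pos k with h | h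
    · simp [h]
    · exact Real.log_nonneg (by exact_mod_cast h)
  have t1 : (0:ℝ) ≤ ((d:ℝ)*k)^(1/γ) := Real.rpow_nonneg (by positivity) _
  have t2 : (0:ℝ) ≤ γ⁻¹*((d:ℝ)*k)^(1/γ-1)*Real.log k :=
    mul_nonneg (mul_nonneg (by positivity) (Real.rpow_nonneg (by positivity) _)) h1
  have t3 : (0:ℝ) ≤ (k:ℝ)^(1/γ-1)*Real.log k^δ :=
    mul_nonneg (Real.rpow_nonneg (Nat.cast_nonneg k) _) (Real.rpow_nonneg h1 _)
  linarith

lemma bk_mono {d : ℕ} {γ δ : ℝ} (hγ0 : 0 < γ) (hγ1 : γ ≤ 1) (hδ0 : 0 < δ)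
    {k : ℕ} (hk : 3 ≤ k) {r : ℝ} (hkr : (k:ℝ) ≤ Real.log r) :
    bk d γ δ k ≤ (d * Real.log r) ^ (1/γ)
      + γ⁻¹ * (d * Real.log r) ^ (1/γ-1) * Real.log (Real.log r)
      + Real.log r ^ (1/γ-1) * Real.log (Real.log r) ^ δ := by
  have hk3 : (3:ℝ) ≤ (k:ℝ) := by exact_mod_cast hk
  have hk0 : (0:ℝ) < k := by linarith
  have hlr0 : (0:ℝ) ≤ Real.log r := by linarith
  have hp1 : (0:ℝ) ≤ 1/γ := by positivity
  have hp2 : (0:ℝ) ≤ 1/γ - 1 := by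
    rw [le_sub_iff_add_le, zero_add, le_div_iff₀ hγ0]; linarith
  have hlog : Real.log k ≤ Real.log (Real.log r) := Real.log_le_log hk0 hkr
  have hlk0 : 0 ≤ Real.log k := Real.log_nonneg (by linarith)
  have h1 : ((d:ℝ)*k)^(1/γ) ≤ ((d:ℝ)*Real.log r)^(1/γ) :=
    Real.rpow_le_rpow (by positivity) (mul_le_mul_of_nonneg_left hkr (Nat.cast_nonneg d)) hp1
  have h2 : ((d:ℝ)*k)^(1/γ-1) ≤ ((d:ℝ)*Real.log r)^(1/γ-1) :=
    Real.rpow_le_rpow (by positivity) (mul_le_mul_of_nonneg_left hkr (Nat.cast_nonneg d)) hp2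
  have h3 : (k:ℝ)^(1/γ-1) ≤ Real.log r^(1/γ-1) :=
    Real.rpow_le_rpow hk0.le hkr hp2
  have h4 : Real.log k ^ δ ≤ Real.log (Real.log r) ^ δ :=
    Real.rpow_le_rpow hlk0 hlog hδ0.le
  unfold bk
  have t2 : γ⁻¹*((d:ℝ)*k)^(1/γ-1)*Real.log k
      ≤ γ⁻¹*((d:ℝ)*Real.log r)^(1/γ-1)*Real.log (Real.log r) := by
    apply mul_le_mul (mul_le_mul_of_nonneg_left h2 (by positivity)) hlog hlk0
    have : (0:ℝ) ≤ ((d:ℝ)*Real.log r)^(1/γ-1) := Real.rpow_nonneg (by positivity) _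
    positivity
  have t3 : (k:ℝ)^(1/γ-1)*Real.log k^δ ≤ Real.log r^(1/γ-1)*Real.log (Real.log r)^δ :=
    mul_le_mul h3 h4 (Real.rpow_nonneg hlk0 _) (Real.rpow_nonneg hlr0 _)
  linarith

lemma summable_v {κ δ : ℝ} (hκ : 0 < κ) (hδ0 : 0 < δ) (hδ1 : δ < 1) :
    Summable (fun k : ℕ => Real.exp (-(κ * Real.log k ^ δ)) / k) := by
  rw [← summable_condensed_iff_of_nonneg (fun n => by positivity)
    (fun m n hm hmn => ?_)]
  · -- condensed series
    have hcong : ∀ k : ℕ, (2:ℝ) ^ k * (Real.exp (-(κ * Real.log ((2:ℕ) ^ k : ℕ) ^ δ)) / ((2:ℕ) ^ k : ℕ))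
        = Real.exp (-(κ * ((k:ℝ) * Real.log 2) ^ δ)) := by
      intro k
      have h2 : ((2 ^ k : ℕ) : ℝ) = (2:ℝ) ^ k := by push_cast; ring
      rw [h2, Real.log_pow]
      field_simp
    refine Summable.congr ?_ (fun k => (hcong k).symm)
    -- Summable fun k => exp (-(κ * (k * log 2)^δ))
    apply summable_of_isBigO_nat (Real.summable_one_div_nat_pow.mpr (le_refl 2))
    rw [Asymptotics.isBigO_iff]
    refine ⟨1, ?_⟩
    have hc : (0:ℝ) < κ * Real.log 2 ^ δ / 2 := by
      have := Real.log_pos (by norm_num : (1:ℝ) < 2)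
      positivity
    have hev := (Asymptotics.isLittleO_iff.mp (isLittleO_log_rpow_atTop hδ0)) hc
    have hev2 : ∀ᶠ n : ℕ in atTop, ‖Real.log (n:ℝ)‖ ≤ κ * Real.log 2 ^ δ / 2 * ‖(n:ℝ) ^ δ‖ :=
      tendsto_natCast_atTop_atTop.eventually hev
    filter_upwards [hev2, eventually_ge_atTop 1] with n hn hn1
    have hn0 : (0:ℝ) < n := by exact_mod_cast hn1
    have hlog : Real.log n ≤ κ * Real.log 2 ^ δ / 2 * (n:ℝ) ^ δ := by
      rw [Real.norm_eq_abs, Real.norm_eq_abs, abs_of_nonneg (Real.log_nonneg (by exact_mod_cast hn1)),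
        abs_of_nonneg (Real.rpow_nonneg hn0.le δ)] at hn
      exact hn
    have hkey : 2 * Real.log n ≤ κ * ((n:ℝ) * Real.log 2) ^ δ := by
      have : ((n:ℝ) * Real.log 2) ^ δ = (n:ℝ) ^ δ * Real.log 2 ^ δ :=
        Real.mul_rpow hn0.le (Real.log_nonneg (by norm_num))
      rw [this]; nlinarith [Real.rpow_nonneg hn0.le δ]
    rw [Real.norm_eq_abs, abs_of_nonneg (Real.exp_pos _).le, Real.norm_eq_abs]
    have h1 : Real.exp (-(κ * ((n:ℝ) * Real.log 2) ^ δ)) ≤ Real.exp (-(2 * Real.log n)) :=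
      Real.exp_le_exp.mpr (by linarith)
    refine h1.trans ?_
    rw [Real.exp_neg]
    have : Real.exp (2 * Real.log n) = (n:ℝ)^2 := by
      rw [two_mul, Real.exp_add, Real.exp_log hn0]; ring
    rw [this, one_mul, abs_of_nonneg (by positivity : (0:ℝ) ≤ 1 / (n:ℝ)^2)]
    rw [inv_eq_one_div]
  · -- antitone
    have hm' : (1:ℝ) ≤ m := by exact_mod_cast hm
    have hmn' : (m:ℝ) ≤ n := by exact_mod_cast hmn
    have hnum : Real.exp (-(κ * Real.log n ^ δ)) ≤ Real.exp (-(κ * Real.log m ^ δ)) := by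
      apply Real.exp_le_exp.mpr
      have : Real.log m ^ δ ≤ Real.log n ^ δ :=
        Real.rpow_le_rpow (Real.log_nonneg hm') (Real.log_le_log (by linarith) hmn') hδ0.le
      nlinarith
    apply div_le_div₀ (Real.exp_pos _).le hnum (by linarith) hmn'

end AuxWeibull

open scoped ENNReal in
theorem weibull_field_max_upper_bound
    {Ω : Type*} [MeasureSpace Ω] [IsProbabilityMeasure (ℙ : Measure Ω)]
    (d : ℕ) (hd : 1 ≤ d) (γ : ℝ) (hγ : γ ∈ Set.Ioc (0 : ℝ) 1)
    (ξ : (Fin d → ℤ) → Ω → ℝ) (hmeas : ∀ z, Measurable (ξ z))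
    (hindep : iIndepFun ξ ℙ)
    (hdist : ∀ z, ∀ x : ℝ, 0 ≤ x → ℙ {ω | x < ξ z ω} = ENNReal.ofReal (Real.exp (-(x ^ γ))))
    (δ : ℝ) (hδ : δ ∈ Set.Ioo (0 : ℝ) 1) :
    ∀ᵐ ω ∂ℙ, ∀ᶠ r : ℝ in atTop, ∀ z : Fin d → ℤ, latticeNorm z ≤ r →
      ξ z ω ≤ (d * Real.log r) ^ (1 / γ)
        + γ⁻¹ * (d * Real.log r) ^ (1 / γ - 1) * Real.log (Real.log r)
        + (Real.log r) ^ (1 / γ - 1) * (Real.log (Real.log r)) ^ δ := by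
  obtain ⟨hγ0, hγ1⟩ := hγ
  obtain ⟨hδ0, hδ1⟩ := hδ
  have hd0 : (0:ℝ) < d := by exact_mod_cast hd
  set N : ℕ → ℕ := fun k => ⌈Real.exp ((k:ℝ)+1)⌉₊ with hN
  set T : ℕ → Finset (Fin d → ℤ) :=
    fun k => Fintype.piFinset (fun _ => Finset.Icc (-(N k : ℤ)) ((N k : ℤ))) with hT
  set A : ℕ → Set Ω := fun k => ⋃ z ∈ T k, {ω | bk d γ δ k < ξ z ω} with hA
  set g : ℕ → ℝ := fun k => Real.exp (((k:ℝ)+4)*d) * Real.exp (-(bk d γ δ k ^ γ)) with hg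
  -- cardinality bound
  have hcard : ∀ k, ((T k).card : ℝ) ≤ Real.exp (((k:ℝ)+4)*d) := by
    intro k
    have hIcc : (Finset.Icc (-(N k : ℤ)) ((N k : ℤ))).card = 2 * N k + 1 := by
      rw [Int.card_Icc]; omega
    have hcard1 : (T k).card = (2 * N k + 1)^d := by
      rw [hT]
      simp [Fintype.card_piFinset, hIcc]
    have hNle : (N k : ℝ) ≤ Real.exp ((k:ℝ)+1) + 1 :=
      (Nat.ceil_lt_add_one (Real.exp_nonneg _)).le
    have hexp1 : (1:ℝ) ≤ Real.exp ((k:ℝ)+1) := Real.one_le_exp (by positivity)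
    have hlin : ((2 * N k + 1 : ℕ) : ℝ) ≤ 5 * Real.exp ((k:ℝ)+1) := by
      push_cast; linarith
    have e3 : Real.exp (3:ℝ) = Real.exp 1 * Real.exp 1 * Real.exp 1 := by
      rw [← Real.exp_add, ← Real.exp_add]; norm_num
    have h5 : (5:ℝ) ≤ Real.exp 3 := by
      have h1 := Real.exp_one_gt_d9
      nlinarith [Real.exp_pos 1]
    have hbase : ((2 * N k + 1 : ℕ) : ℝ) ≤ Real.exp ((k:ℝ)+4) := by
      have : Real.exp ((k:ℝ)+4) = Real.exp ((k:ℝ)+1) * Real.exp 3 := by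
        rw [← Real.exp_add]; ring_nf
      rw [this]
      calc ((2 * N k + 1 : ℕ) : ℝ) ≤ 5 * Real.exp ((k:ℝ)+1) := hlin
        _ ≤ Real.exp 3 * Real.exp ((k:ℝ)+1) := by
            apply mul_le_mul_of_nonneg_right h5 (Real.exp_nonneg _)
        _ = Real.exp ((k:ℝ)+1) * Real.exp 3 := by ring
    calc ((T k).card : ℝ) = (((2 * N k + 1)^d : ℕ) : ℝ) := by rw [hcard1]
      _ = (((2 * N k + 1 : ℕ) : ℝ))^d := by push_cast; ring
      _ ≤ (Real.exp ((k:ℝ)+4))^d := by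
          apply pow_le_pow_left₀ (by positivity) hbase
      _ = Real.exp (((k:ℝ)+4)*d) := by
          rw [mul_comm ((k:ℝ)+4) (d:ℝ), Real.exp_nat_mul]
  -- measure bound
  have hPA : ∀ k, ℙ (A k) ≤ ENNReal.ofReal (g k) := by
    intro k
    calc ℙ (A k) ≤ ∑ z ∈ T k, ℙ {ω | bk d γ δ k < ξ z ω} :=
          measure_biUnion_finset_le _ _
      _ = ∑ _z ∈ T k, ENNReal.ofReal (Real.exp (-(bk d γ δ k ^ γ))) :=
          Finset.sum_congr rfl (fun z _ => hdist z _ (bk_nonneg d hγ0 δ k))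
      _ = ((T k).card : ℝ≥0∞) * ENNReal.ofReal (Real.exp (-(bk d γ δ k ^ γ))) := by
          rw [Finset.sum_const, nsmul_eq_mul]
      _ ≤ ENNReal.ofReal (Real.exp (((k:ℝ)+4)*d))
            * ENNReal.ofReal (Real.exp (-(bk d γ δ k ^ γ))) := by
          apply mul_le_mul_left
          rw [← ENNReal.ofReal_natCast ((T k).card)]
          exact ENNReal.ofReal_le_ofReal (hcard k)
      _ = ENNReal.ofReal (g k) := by
          rw [← ENNReal.ofReal_mul (Real.exp_nonneg _)]
  -- summability
  have hκ0 : 0 < κc d γ := by unfold κc; positivity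
  have hgnn : ∀ k, 0 ≤ g k := fun k => by positivity
  have hvnn : ∀ k : ℕ, 0 ≤ Real.exp (-(κc d γ * Real.log k ^ δ)) / k := fun k => by positivity
  have hgsum : Summable g := by
    apply summable_of_isBigO_nat (summable_v hκ0 hδ0 hδ1)
    rw [Asymptotics.isBigO_iff]
    refine ⟨1, ?_⟩
    filter_upwards [claimC hd hγ0 hγ1 hδ0 hδ1] with k hk
    rw [Real.norm_eq_abs, Real.norm_eq_abs, abs_of_nonneg (hgnn k),
      abs_of_nonneg (hvnn k), one_mul]
    exact hk
  have htsum : (∑' k, ℙ (A k)) ≠ ⊤ := by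
    have h1 : (∑' k, ℙ (A k)) ≤ ∑' k, ENNReal.ofReal (g k) := ENNReal.tsum_le_tsum hPA
    rw [← ENNReal.ofReal_tsum_of_nonneg hgnn hgsum] at h1
    exact ne_top_of_le_ne_top ENNReal.ofReal_ne_top h1
  have hBC := MeasureTheory.ae_eventually_notMem htsum
  filter_upwards [hBC] with ω hω
  rw [eventually_atTop] at hω
  obtain ⟨K, hK⟩ := hω
  rw [eventually_atTop]
  refine ⟨Real.exp (((max K 3 : ℕ):ℝ) + 1), ?_⟩
  intro r hr
  have hr0 : 0 < r := lt_of_lt_of_le (Real.exp_pos _) hr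
  have hlogr : ((max K 3 : ℕ):ℝ) + 1 ≤ Real.log r := by
    exact (Real.le_log_iff_exp_le hr0).mpr hr
  set k := ⌊Real.log r⌋₊ with hk
  have hlogr' : ((max K 3 : ℕ):ℝ) ≥ 0 := Nat.cast_nonneg _
  have hkM : max K 3 + 1 ≤ k := Nat.le_floor (by push_cast at hlogr ⊢; linarith)
  have hkK : K ≤ k := by
    have := le_max_left K 3
    omega
  have hk3 : 3 ≤ k := by
    have := le_max_right K 3
    omega
  have hkr : (k:ℝ) ≤ Real.log r := Nat.floor_le (by linarith)
  have hrk : Real.log r < (k:ℝ)+1 := by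
    have := Nat.lt_floor_add_one (Real.log r)
    exact_mod_cast this
  intro z hz
  have hωA := hK k hkK
  have hrN : r ≤ (N k : ℝ) := by
    have hlt : r < Real.exp ((k:ℝ)+1) := by
      rw [← Real.exp_log hr0]
      exact Real.exp_lt_exp.mpr hrk
    exact le_trans hlt.le (Nat.le_ceil _)
  have hzT : z ∈ T k := by
    rw [hT]
    rw [Fintype.mem_piFinset]
    intro j
    rw [Finset.mem_Icc]
    have hj : |(z j : ℝ)| ≤ r := by
      refine le_trans ?_ hz
      unfold latticeNorm
      exact Finset.single_le_sum (f := fun i => |(z i : ℝ)|)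
        (fun i _ => abs_nonneg _) (Finset.mem_univ j)
    have hjr : |(z j : ℝ)| ≤ (N k : ℝ) := le_trans hj hrN
    have hint : |z j| ≤ (N k : ℤ) := by
      have : ((|z j| : ℤ) : ℝ) ≤ ((N k : ℤ) : ℝ) := by push_cast [Int.cast_abs]; exact_mod_cast hjr
      exact_mod_cast this
    have := abs_le.mp hint
    omega
  have hnot : ¬ (bk d γ δ k < ξ z ω) := by
    intro hlt
    apply hωA
    rw [hA]
    simp only [Set.mem_iUnion]
    exact ⟨z, hzT, hlt⟩
  have hle : ξ z ω ≤ bk d γ δ k := not_lt.mp hnot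
  exact le_trans hle (bk_mono hγ0 hγ1 hδ0 hk3 hkr)
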